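/- For any real N×N matrix a that is entrywise non-negative and irreducible (in the sense that for all indices i,j there is m ≥ 1 with (a^m)_{ij} > 0), the spectral radius r(a) is an eigenvalue of a that is positive, simple, and admits a strictly positive eigenvector. -/

import Mathlib

open scoped BigOperators

section PerronFrobeniusAux

open Polynomial Matrix Finset

private lemma derivative_finset_prod {R : Type*} [CommRing R] {ι : Type*} [DecidableEq ι]
    (s : Finset ι) (f : ι → R[X]) :
    derivative (∏ j ∈ s, f j) = ∑ j ∈ s, (∏ k ∈ s.erase j, f k) * derivative (f j) := by
  classical
  induction s using Finset.induction_on with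
  | empty => simp
  | @insert j t hj ih =>
    rw [Finset.prod_insert hj, derivative_mul, ih, Finset.sum_insert hj,
      Finset.erase_insert hj, Finset.mul_sum, mul_comm (derivative (f j))]
    congr 1
    refine Finset.sum_congr rfl fun k hk => ?_
    rw [Finset.erase_insert_of_ne (by rintro rfl; exact hj hk), Finset.prod_insert
      (fun h => hj (Finset.mem_of_mem_erase h)), mul_assoc]

private lemma derivative_det' {R : Type*} [CommRing R] {n : Type*} [Fintype n] [DecidableEq n]
    (M : Matrix n n R[X]) :
    derivative M.det = ∑ i : n, (M.updateCol i (fun r => derivative (M r i))).det := by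
  classical
  rw [det_apply', map_sum]
  have key : ∀ σ : Equiv.Perm n,
      derivative (((Equiv.Perm.sign σ : ℤ) : R[X]) * ∏ i, M (σ i) i)
      = ∑ i : n, ((Equiv.Perm.sign σ : ℤ) : R[X]) *
          ∏ k, (M.updateCol i (fun r => derivative (M r i))) (σ k) k := by
    intro σ
    rw [derivative_intCast_mul, derivative_finset_prod, Finset.mul_sum]
    refine Finset.sum_congr rfl fun i _ => ?_
    congr 1
    rw [← Finset.mul_prod_erase Finset.univ _ (Finset.mem_univ i)]
    rw [Matrix.updateCol_self, mul_comm]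
    congr 1
    refine Finset.prod_congr rfl fun k hk => ?_
    rw [Matrix.updateCol_ne (Finset.ne_of_mem_erase hk)]
  calc ∑ σ : Equiv.Perm n, derivative (((Equiv.Perm.sign σ : ℤ) : R[X]) * ∏ i, M (σ i) i)
      = ∑ σ : Equiv.Perm n, ∑ i : n, ((Equiv.Perm.sign σ : ℤ) : R[X]) *
          ∏ k, (M.updateCol i (fun r => derivative (M r i))) (σ k) k := by
        exact Finset.sum_congr rfl fun σ _ => key σ
    _ = ∑ i : n, ∑ σ : Equiv.Perm n, ((Equiv.Perm.sign σ : ℤ) : R[X]) *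
          ∏ k, (M.updateCol i (fun r => derivative (M r i))) (σ k) k :=
        Finset.sum_comm
    _ = ∑ i : n, (M.updateCol i (fun r => derivative (M r i))).det := by
        refine Finset.sum_congr rfl fun i _ => ?_
        rw [det_apply']

private lemma submatrix_charmatrix {R : Type*} [CommRing R] {n m : Type*} [Fintype n]
    [DecidableEq n] [Fintype m] [DecidableEq m] (M : Matrix n n R) (f : m → n)
    (hf : Function.Injective f) :
    (charmatrix M).submatrix f f = charmatrix (M.submatrix f f) := by
  ext i j
  by_cases h : i = j
  · subst h; simp [charmatrix_apply_eq]
  · rw [Matrix.submatrix_apply, charmatrix_apply_ne _ _ _ (fun hh => h (hf hh)),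
      charmatrix_apply_ne _ _ _ h, Matrix.submatrix_apply]

private lemma derivative_charpoly' {R : Type*} [CommRing R] {n : ℕ}
    (M : Matrix (Fin (n+1)) (Fin (n+1)) R) :
    derivative M.charpoly = ∑ i : Fin (n+1), (M.submatrix i.succAbove i.succAbove).charpoly := by
  rw [Matrix.charpoly, derivative_det']
  refine Finset.sum_congr rfl fun i _ => ?_
  have hd : (fun r => derivative (charmatrix M r i)) = fun r => if r = i then 1 else 0 := by
    funext r
    by_cases h : r = i
    · subst h; rw [charmatrix_apply_eq]; simp
    · rw [charmatrix_apply_ne _ _ _ h]; simp [h]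
  rw [hd, det_succ_column _ i, Finset.sum_eq_single i]
  · rw [Matrix.updateCol_self]
    have hsub : ((charmatrix M).updateCol i (fun r => if r = i then 1 else 0)).submatrix
        i.succAbove i.succAbove = charmatrix (M.submatrix i.succAbove i.succAbove) := by
      rw [← submatrix_charmatrix M _ (Fin.succAbove_right_injective)]
      ext r s
      rw [Matrix.submatrix_apply, Matrix.submatrix_apply,
        Matrix.updateCol_ne (Fin.succAbove_ne i s)]
    rw [hsub, if_pos rfl, Matrix.charpoly]
    have : ((-1 : R[X])) ^ ((i : ℕ) + (i : ℕ)) = 1 := Even.neg_one_pow ⟨i, rfl⟩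
    rw [this, one_mul, one_mul]
  · intro r _ hr
    rw [Matrix.updateCol_self, if_neg hr, mul_zero, zero_mul]
  · intro h; exact absurd (Finset.mem_univ i) h

private lemma eval_charpoly' {R : Type*} [CommRing R] {n : Type*} [Fintype n] [DecidableEq n]
    (M : Matrix n n R) (x : R) :
    M.charpoly.eval x = (x • (1 : Matrix n n R) - M).det := by
  rw [Matrix.charpoly, ← Polynomial.coe_evalRingHom, RingHom.map_det]
  congr 1
  ext i j
  by_cases h : i = j
  · subst h
    simp [charmatrix_apply_eq, Matrix.one_apply]
  · simp [charmatrix_apply_ne _ _ _ h, Matrix.one_apply_ne h]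

private lemma spectrum_eq_charpoly_roots {F : Type*} [Field F] {n : Type*} [Fintype n]
    [DecidableEq n] (M : Matrix n n F) :
    spectrum F M = {x | M.charpoly.IsRoot x} := by
  ext x
  rw [spectrum.mem_iff, Set.mem_setOf_eq, Polynomial.IsRoot, eval_charpoly',
    Algebra.algebraMap_eq_smul_one]
  constructor
  · intro h
    by_contra hdet
    exact h ((Matrix.isUnit_iff_isUnit_det _).mpr (isUnit_iff_ne_zero.mpr hdet))
  · intro h hu
    exact ((Matrix.isUnit_iff_isUnit_det _).mp hu).ne_zero h

private lemma mulVec_apply'' {N M : ℕ} (C : Matrix (Fin N) (Fin M) ℝ) (v : Fin M → ℝ)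
    (i : Fin N) : C.mulVec v i = ∑ j, C i j * v j := rfl

namespace PFAux

variable {N : ℕ}

private lemma pow_entry_nonneg (A : Matrix (Fin N) (Fin N) ℝ) (hnn : ∀ i j, 0 ≤ A i j) :
    ∀ (m : ℕ) i j, 0 ≤ (A ^ m) i j := by
  intro m
  induction m with
  | zero =>
    intro i j; rw [pow_zero]
    by_cases h : i = j <;> simp [Matrix.one_apply, h]
  | succ m ih =>
    intro i j
    rw [pow_succ, Matrix.mul_apply]
    exact Finset.sum_nonneg fun k _ => mul_nonneg (ih i k) (hnn k j)

private lemma mulVec_mono {M : Matrix (Fin N) (Fin N) ℝ} (hM : ∀ i j, 0 ≤ M i j)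
    {v w : Fin N → ℝ} (h : ∀ i, v i ≤ w i) : ∀ i, M.mulVec v i ≤ M.mulVec w i := by
  intro i
  simp only [Matrix.mulVec, dotProduct]
  exact Finset.sum_le_sum fun j _ => mul_le_mul_of_nonneg_left (h j) (hM i j)

variable (A : Matrix (Fin N) (Fin N) ℝ)

noncomputable def K (hirr : ∀ i j, ∃ m : ℕ, 1 ≤ m ∧ 0 < (A ^ m) i j) : ℕ :=
  Finset.sup Finset.univ fun p : Fin N × Fin N => (hirr p.1 p.2).choose

noncomputable def B (hirr : ∀ i j, ∃ m : ℕ, 1 ≤ m ∧ 0 < (A ^ m) i j) :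
    Matrix (Fin N) (Fin N) ℝ :=
  ∑ k ∈ Finset.range (K A hirr + 1), A ^ k

variable (hirr : ∀ i j, ∃ m : ℕ, 1 ≤ m ∧ 0 < (A ^ m) i j)

private lemma B_nonneg (hnn : ∀ i j, 0 ≤ A i j) : ∀ i j, 0 ≤ B A hirr i j := by
  intro i j
  rw [B, Matrix.sum_apply]
  exact Finset.sum_nonneg fun k _ => pow_entry_nonneg A hnn k i j

private lemma B_pos (hnn : ∀ i j, 0 ≤ A i j) : ∀ i j, 0 < B A hirr i j := by
  intro i j
  rw [B, Matrix.sum_apply]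
  refine Finset.sum_pos' (fun k _ => pow_entry_nonneg A hnn k i j) ?_
  refine ⟨(hirr i j).choose, ?_, (hirr i j).choose_spec.2⟩
  rw [Finset.mem_range, Nat.lt_succ_iff]
  exact Finset.le_sup (f := fun p : Fin N × Fin N => (hirr p.1 p.2).choose)
    (Finset.mem_univ (i, j))

private lemma B_comm : A * B A hirr = B A hirr * A := by
  rw [B, Finset.mul_sum, Finset.sum_mul]
  exact Finset.sum_congr rfl fun k _ => ((Commute.refl A).pow_right k).eq

private lemma mulVec_B_pos (hnn : ∀ i j, 0 ≤ A i j) {v : Fin N → ℝ}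
    (h0 : ∀ i, 0 ≤ v i) (hne : ∃ j, v j ≠ 0) (i : Fin N) :
    0 < (B A hirr).mulVec v i := by
  obtain ⟨j, hj⟩ := hne
  simp only [Matrix.mulVec, dotProduct]
  refine Finset.sum_pos' (fun k _ => mul_nonneg (B_nonneg A hirr hnn i k) (h0 k)) ?_
  exact ⟨j, Finset.mem_univ j, mul_pos (B_pos A hirr hnn i j) (lt_of_le_of_ne (h0 j) (Ne.symm hj))⟩

private lemma trace_pow_le {hN : 0 < N} {ρ : ℝ} (hρ0 : 0 ≤ ρ)
    (hub : ∀ μ ∈ spectrum ℂ (A.map Complex.ofReal), ‖μ‖ ≤ ρ) :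
    ∀ s : ℕ, 1 ≤ s → (A ^ s).trace ≤ (N : ℝ) * ρ ^ s := by
  intro s hs
  haveI : Nonempty (Fin N) := ⟨⟨0, hN⟩⟩
  set M := A.map Complex.ofReal with hM
  have hmap : (M ^ s) = (A ^ s).map Complex.ofReal := by
    have : M = Complex.ofRealHom.mapMatrix A := rfl
    rw [this, ← map_pow]
    rfl
  have htr : ((A ^ s).trace : ℂ) = (M ^ s).trace := by
    rw [hmap]
    simp [Matrix.trace, Matrix.diag]
  have h1 : (M ^ s).trace = ((M ^ s).charpoly).roots.sum :=
    Matrix.trace_eq_sum_roots_charpoly _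
  have hroots : ∀ x ∈ ((M ^ s).charpoly).roots.map (fun z : ℂ => ‖z‖), x ≤ ρ ^ s := by
    intro x hx
    obtain ⟨μ, hμ, rfl⟩ := Multiset.mem_map.mp hx
    have hμs : μ ∈ spectrum ℂ (M ^ s) := by
      rw [spectrum_eq_charpoly_roots]
      exact (Polynomial.mem_roots'.mp hμ).2
    have hspec : spectrum ℂ (M ^ s)
        = (fun k => Polynomial.eval k ((Polynomial.X : Polynomial ℂ) ^ s)) '' spectrum ℂ M := by
      have h := spectrum.map_polynomial_aeval_of_degree_pos M ((Polynomial.X : Polynomial ℂ) ^ s)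
        (by rw [Polynomial.degree_X_pow]; exact_mod_cast hs)
      rwa [map_pow, Polynomial.aeval_X] at h
    rw [hspec] at hμs
    obtain ⟨lam, hlam, rfl⟩ := hμs
    simp only [Polynomial.eval_pow, Polynomial.eval_X, norm_pow]
    exact pow_le_pow_left₀ (norm_nonneg _) (hub lam hlam) s
  have hcard : (Multiset.card ((M ^ s).charpoly).roots : ℝ) ≤ (N : ℝ) := by
    have h1 : Multiset.card ((M ^ s).charpoly).roots ≤ ((M ^ s).charpoly).natDegree :=
      Polynomial.card_roots' _
    have h2 : ((M ^ s).charpoly).natDegree = N := by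
      rw [Matrix.charpoly_natDegree_eq_dim, Fintype.card_fin]
    exact_mod_cast h2 ▸ h1
  calc (A ^ s).trace ≤ |(A ^ s).trace| := le_abs_self _
    _ = ‖(M ^ s).trace‖ := by rw [← htr, Complex.norm_real, Real.norm_eq_abs]
    _ ≤ (((M ^ s).charpoly).roots.map (fun z : ℂ => ‖z‖)).sum := by
        rw [h1]
        exact norm_multiset_sum_le _
    _ ≤ Multiset.card (((M ^ s).charpoly).roots.map (fun z : ℂ => ‖z‖)) • (ρ ^ s) :=
        Multiset.sum_le_card_nsmul _ _ hroots
    _ ≤ (N : ℝ) * ρ ^ s := by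
        rw [Multiset.card_map, nsmul_eq_mul]
        exact mul_le_mul_of_nonneg_right hcard (pow_nonneg hρ0 s)

include hirr in
private lemma le_rho (hN : 0 < N) (hnn : ∀ i j, 0 ≤ A i j) {ρ : ℝ} (hρ0 : 0 ≤ ρ)
    (hub : ∀ μ ∈ spectrum ℂ (A.map Complex.ofReal), ‖μ‖ ≤ ρ) {v : Fin N → ℝ}
    (hv0 : ∀ i, 0 ≤ v i) (hvne : ∃ j, v j ≠ 0) {t : ℝ}
    (hAv : ∀ i, t * v i ≤ A.mulVec v i) : t ≤ ρ := by
  by_cases ht' : t ≤ 0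
  · linarith
  push_neg at ht'
  haveI : Nonempty (Fin N) := ⟨⟨0, hN⟩⟩
  set u := (B A hirr).mulVec v with hu
  have hupos : ∀ i, 0 < u i := mulVec_B_pos A hirr hnn hv0 hvne
  have hAu : ∀ i, t * u i ≤ A.mulVec u i := by
    intro i
    have h1 : A.mulVec u = (B A hirr).mulVec (A.mulVec v) := by
      rw [hu, Matrix.mulVec_mulVec, Matrix.mulVec_mulVec, B_comm]
    have h2 : t * u i = (B A hirr).mulVec (t • v) i := by
      rw [Matrix.mulVec_smul, hu, Pi.smul_apply, smul_eq_mul]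
    rw [h1, h2]
    exact mulVec_mono (B_nonneg A hirr hnn) (fun j => by
      rw [Pi.smul_apply, smul_eq_mul]; exact hAv j) i
  have hpow : ∀ m : ℕ, ∀ i, t ^ m * u i ≤ (A ^ m).mulVec u i := by
    intro m
    induction m with
    | zero => intro i; simp [Matrix.one_mulVec]
    | succ m ih =>
      intro i
      have h1 : (A ^ (m+1)).mulVec u = A.mulVec ((A ^ m).mulVec u) := by
        rw [pow_succ', ← Matrix.mulVec_mulVec]
      rw [h1]
      calc t ^ (m+1) * u i = t ^ m * (t * u i) := by ring
        _ ≤ t ^ m * A.mulVec u i :=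
            mul_le_mul_of_nonneg_left (hAu i) (pow_nonneg ht'.le m)
        _ = A.mulVec (t ^ m • u) i := by
            rw [Matrix.mulVec_smul, Pi.smul_apply, smul_eq_mul]
        _ ≤ A.mulVec ((A ^ m).mulVec u) i := by
            refine mulVec_mono hnn (fun j => ?_) i
            rw [Pi.smul_apply, smul_eq_mul]
            exact ih j
  -- constants
  obtain ⟨i1, _, hi1⟩ := Finset.exists_min_image Finset.univ u ⟨Classical.arbitrary _, Finset.mem_univ _⟩
  obtain ⟨i2, _, hi2⟩ := Finset.exists_max_image Finset.univ u ⟨Classical.arbitrary _, Finset.mem_univ _⟩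
  set c1 := u i1 with hc1
  set c2 := u i2 with hc2
  have hc1pos : 0 < c1 := hupos i1
  have hc2pos : 0 < c2 := hupos i2
  obtain ⟨p0, _, hp0⟩ := Finset.exists_min_image Finset.univ
    (fun p : Fin N × Fin N => (A ^ (hirr p.1 p.2).choose) p.1 p.2)
    ⟨Classical.arbitrary _, Finset.mem_univ _⟩
  set δ := (A ^ (hirr p0.1 p0.2).choose) p0.1 p0.2 with hδ
  have hδpos : 0 < δ := (hirr p0.1 p0.2).choose_spec.2
  set c4 := max 1 (ρ ^ K A hirr) with hc4
  have hc4pos : 0 < c4 := lt_of_lt_of_le one_pos (le_max_left _ _)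
  have hc4k : ∀ k, k ≤ K A hirr → ρ ^ k ≤ c4 := by
    intro k hk
    rcases le_total ρ 1 with h | h
    · exact le_trans (pow_le_one₀ hρ0 h) (le_max_left _ _)
    · exact le_trans (pow_le_pow_right₀ h hk) (le_max_right _ _)
  set e : Fin N := ⟨0, hN⟩
  have key : ∀ m : ℕ, c1 * δ * t ^ m ≤ ((N : ℝ) * c2 * (N * c4)) * ρ ^ m := by
    intro m
    obtain ⟨j, _, hj⟩ := Finset.exists_max_image Finset.univ (fun j => (A ^ m) e j)
      ⟨Classical.arbitrary _, Finset.mem_univ _⟩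
    have hAm0 : ∀ l, 0 ≤ (A ^ m) e l := fun l => pow_entry_nonneg A hnn m e l
    have e1 : t ^ m * c1 ≤ (N : ℝ) * (A ^ m) e j * c2 := by
      have h0 : t ^ m * c1 ≤ t ^ m * u e :=
        mul_le_mul_of_nonneg_left (hi1 e (Finset.mem_univ e)) (pow_nonneg ht'.le m)
      have h1 : t ^ m * u e ≤ (A ^ m).mulVec u e := hpow m e
      have h2 : (A ^ m).mulVec u e ≤ ∑ l, (A ^ m) e l * c2 := by
        simp only [Matrix.mulVec, dotProduct]
        exact Finset.sum_le_sum fun l _ =>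
          mul_le_mul_of_nonneg_left (hi2 l (Finset.mem_univ l)) (hAm0 l)
      have h3 : ∑ l, (A ^ m) e l * c2 ≤ (N : ℝ) * (A ^ m) e j * c2 := by
        rw [← Finset.sum_mul]
        refine mul_le_mul_of_nonneg_right ?_ hc2pos.le
        calc ∑ l, (A ^ m) e l ≤ (Finset.univ (α := Fin N)).card • (A ^ m) e j :=
              Finset.sum_le_card_nsmul _ _ _ (fun l _ => hj l (Finset.mem_univ l))
          _ = (N : ℝ) * (A ^ m) e j := by
              rw [Finset.card_univ, Fintype.card_fin, nsmul_eq_mul]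
      linarith
    set k := (hirr j e).choose with hk
    have hk1 : 1 ≤ k := (hirr j e).choose_spec.1
    have hkK : k ≤ K A hirr := Finset.le_sup (f := fun p : Fin N × Fin N => (hirr p.1 p.2).choose)
      (Finset.mem_univ (j, e))
    have e2 : δ ≤ (A ^ k) j e := hp0 (j, e) (Finset.mem_univ _)
    have e3 : (A ^ m) e j * (A ^ k) j e ≤ (N : ℝ) * (c4 * ρ ^ m) := by
      have h4 : (A ^ m) e j * (A ^ k) j e ≤ (A ^ (m + k)) e e := by
        rw [pow_add, Matrix.mul_apply]
        exact Finset.single_le_sum (f := fun l => (A ^ m) e l * (A ^ k) l e)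
          (fun l _ => mul_nonneg (hAm0 l) (pow_entry_nonneg A hnn k l e)) (Finset.mem_univ j)
      have h5 : (A ^ (m + k)) e e ≤ (A ^ (m + k)).trace := by
        refine Finset.single_le_sum (f := fun l => (A ^ (m + k)) l l)
          (fun l _ => pow_entry_nonneg A hnn (m + k) l l) (Finset.mem_univ e)
      have h6 : (A ^ (m + k)).trace ≤ (N : ℝ) * ρ ^ (m + k) :=
        trace_pow_le A (hN := hN) hρ0 hub (m + k) (le_trans hk1 (Nat.le_add_left k m))
      have h7 : ρ ^ (m + k) ≤ c4 * ρ ^ m := by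
        rw [pow_add, mul_comm]
        exact mul_le_mul_of_nonneg_right (hc4k k hkK) (pow_nonneg hρ0 m)
      have h8 : (N : ℝ) * ρ ^ (m + k) ≤ (N : ℝ) * (c4 * ρ ^ m) :=
        mul_le_mul_of_nonneg_left h7 (Nat.cast_nonneg N)
      calc (A ^ m) e j * (A ^ k) j e ≤ (A ^ (m + k)) e e := h4
        _ ≤ (A ^ (m + k)).trace := h5
        _ ≤ (N : ℝ) * ρ ^ (m + k) := h6
        _ ≤ (N : ℝ) * (c4 * ρ ^ m) := h8
    -- combine
    have e4 : t ^ m * c1 * δ ≤ (N : ℝ) * (A ^ m) e j * c2 * δ :=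
      mul_le_mul_of_nonneg_right e1 hδpos.le
    have e5 : (N : ℝ) * (A ^ m) e j * c2 * δ ≤ (N : ℝ) * c2 * ((A ^ m) e j * (A ^ k) j e) := by
      have h' : (A ^ m) e j * δ ≤ (A ^ m) e j * (A ^ k) j e :=
        mul_le_mul_of_nonneg_left e2 (hAm0 j)
      have h'' := mul_le_mul_of_nonneg_left h'
        (mul_nonneg (Nat.cast_nonneg (α := ℝ) N) hc2pos.le)
      calc (N : ℝ) * (A ^ m) e j * c2 * δ = (N : ℝ) * c2 * ((A ^ m) e j * δ) := by ring
        _ ≤ (N : ℝ) * c2 * ((A ^ m) e j * (A ^ k) j e) := h''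
    have e6 : (N : ℝ) * c2 * ((A ^ m) e j * (A ^ k) j e) ≤ (N : ℝ) * c2 * ((N : ℝ) * (c4 * ρ ^ m)) :=
      mul_le_mul_of_nonneg_left e3 (by positivity)
    calc c1 * δ * t ^ m = t ^ m * c1 * δ := by ring
      _ ≤ (N : ℝ) * c2 * ((N : ℝ) * (c4 * ρ ^ m)) := le_trans e4 (le_trans e5 e6)
      _ = ((N : ℝ) * c2 * (N * c4)) * ρ ^ m := by ring
  -- conclude t ≤ ρ
  by_contra hcon
  push_neg at hcon
  have hq0 : 0 ≤ ρ / t := div_nonneg hρ0 ht'.le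
  have hq1 : ρ / t < 1 := (div_lt_one ht').mpr hcon
  set C := (N : ℝ) * c2 * (N * c4) with hC
  have hCpos : 0 < C := by positivity
  have hfrac : ∀ m : ℕ, c1 * δ / C ≤ (ρ / t) ^ m := by
    intro m
    rw [div_pow]
    rw [div_le_div_iff₀ hCpos (pow_pos ht' m)]
    calc c1 * δ * t ^ m ≤ C * ρ ^ m := key m
      _ = ρ ^ m * C := by ring
  have htend : Filter.Tendsto (fun m : ℕ => (ρ / t) ^ m) Filter.atTop (nhds 0) :=
    tendsto_pow_atTop_nhds_zero_of_lt_one hq0 hq1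
  have hev := htend.eventually_lt_const (show 0 < c1 * δ / C by positivity)
  obtain ⟨m, hm⟩ := hev.exists
  exact absurd (hfrac m) (not_le.mpr hm)

include hirr in
private lemma lt_rho (hN : 0 < N) (hnn : ∀ i j, 0 ≤ A i j) {ρ : ℝ} (hρ0 : 0 ≤ ρ)
    (hub : ∀ μ ∈ spectrum ℂ (A.map Complex.ofReal), ‖μ‖ ≤ ρ) {v : Fin N → ℝ}
    (hv0 : ∀ i, 0 ≤ v i) (hvne : ∃ j, v j ≠ 0) {t : ℝ}
    (hAv : ∀ i, t * v i ≤ A.mulVec v i) (hne : ∃ i, t * v i ≠ A.mulVec v i) : t < ρ := by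
  haveI : Nonempty (Fin N) := ⟨⟨0, hN⟩⟩
  set u := (B A hirr).mulVec v with hu
  have hupos : ∀ i, 0 < u i := mulVec_B_pos A hirr hnn hv0 hvne
  set w := fun i => A.mulVec v i - t * v i with hw
  have hw0 : ∀ i, 0 ≤ w i := fun i => by simp only [hw]; linarith [hAv i]
  have hwne : ∃ i, w i ≠ 0 := by
    obtain ⟨i, hi⟩ := hne
    exact ⟨i, fun h => hi (by simp only [hw] at h; linarith)⟩
  have hBw : ∀ i, 0 < (B A hirr).mulVec w i := mulVec_B_pos A hirr hnn hw0 hwne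
  have hAus : ∀ i, A.mulVec u i = t * u i + (B A hirr).mulVec w i := by
    intro i
    have h1 : A.mulVec u = (B A hirr).mulVec (A.mulVec v) := by
      rw [hu, Matrix.mulVec_mulVec, Matrix.mulVec_mulVec, B_comm]
    have hv' : A.mulVec v = t • v + w := by
      funext l; simp only [Pi.add_apply, Pi.smul_apply, smul_eq_mul, hw]; ring
    rw [h1, hv', Matrix.mulVec_add, Matrix.mulVec_smul]
    simp only [Pi.add_apply, Pi.smul_apply, smul_eq_mul, hu]
  obtain ⟨i0, _, hi0⟩ := Finset.exists_min_image Finset.univ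
    (fun i => (B A hirr).mulVec w i / u i) ⟨Classical.arbitrary _, Finset.mem_univ _⟩
  set ε := (B A hirr).mulVec w i0 / u i0 with hε
  have hεpos : 0 < ε := div_pos (hBw i0) (hupos i0)
  have hstep : ∀ i, (t + ε) * u i ≤ A.mulVec u i := by
    intro i
    have h2 : ε ≤ (B A hirr).mulVec w i / u i := hi0 i (Finset.mem_univ i)
    have h3 : ε * u i ≤ (B A hirr).mulVec w i := (le_div_iff₀ (hupos i)).mp h2
    rw [hAus i]; linarith
  have := le_rho A hirr hN hnn hρ0 hub (fun i => (hupos i).le)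
    ⟨Classical.arbitrary _, (hupos _).ne'⟩ hstep
  linarith

include hirr in
private lemma exists_pos_eigenvector (hN : 0 < N) (hnn : ∀ i j, 0 ≤ A i j) {ρ : ℝ} (hρ0 : 0 ≤ ρ)
    (hub : ∀ μ ∈ spectrum ℂ (A.map Complex.ofReal), ‖μ‖ ≤ ρ)
    (hmem : ∃ lam ∈ spectrum ℂ (A.map Complex.ofReal), ‖lam‖ = ρ) :
    ∃ u : Fin N → ℝ, (∀ i, 0 < u i) ∧ A.mulVec u = ρ • u := by
  haveI : Nonempty (Fin N) := ⟨⟨0, hN⟩⟩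
  obtain ⟨lam, hlam, hlamabs⟩ := hmem
  set M := A.map Complex.ofReal with hM
  have hdet : (lam • (1 : Matrix (Fin N) (Fin N) ℂ) - M).det = 0 := by
    rw [spectrum_eq_charpoly_roots] at hlam
    have := hlam
    rwa [Set.mem_setOf_eq, Polynomial.IsRoot, eval_charpoly'] at this
  obtain ⟨z, hz0, hz⟩ := (Matrix.exists_mulVec_eq_zero_iff (M := lam • (1 : Matrix (Fin N) (Fin N) ℂ) - M)).mpr hdet
  have heig : M.mulVec z = lam • z := by
    have h1 := hz
    rw [Matrix.sub_mulVec, Matrix.smul_mulVec, Matrix.one_mulVec, sub_eq_zero] at h1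
    exact h1.symm
  set x := fun i => ‖z i‖ with hx
  have hx0 : ∀ i, 0 ≤ x i := fun i => norm_nonneg _
  have hxne : ∃ j, x j ≠ 0 := by
    obtain ⟨j, hj⟩ := Function.ne_iff.mp hz0
    exact ⟨j, fun h => hj (by simpa [hx, norm_eq_zero] using h)⟩
  have hAx : ∀ i, ρ * x i ≤ A.mulVec x i := by
    intro i
    have h1 : M.mulVec z i = lam * z i := by rw [heig]; simp
    calc ρ * x i = ‖lam * z i‖ := by
          rw [norm_mul, hlamabs]
      _ = ‖∑ j, M i j * z j‖ := by
          rw [← h1]; rfl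
      _ ≤ ∑ j, ‖M i j * z j‖ := norm_sum_le _ _
      _ = ∑ j, A i j * x j := by
          refine Finset.sum_congr rfl fun j _ => ?_
          rw [norm_mul, hM]
          simp only [Matrix.map_apply]
          rw [Complex.norm_real, Real.norm_eq_abs, abs_of_nonneg (hnn i j)]
      _ = A.mulVec x i := rfl
  have heq : ∀ i, ρ * x i = A.mulVec x i := by
    by_contra h
    push_neg at h
    exact absurd (lt_rho A hirr hN hnn hρ0 hub hx0 hxne hAx h) (lt_irrefl ρ)
  have hxeig : A.mulVec x = ρ • x := by
    funext i; rw [Pi.smul_apply, smul_eq_mul]; exact (heq i).symm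
  refine ⟨(B A hirr).mulVec x, mulVec_B_pos A hirr hnn hx0 hxne, ?_⟩
  rw [Matrix.mulVec_mulVec, B_comm, ← Matrix.mulVec_mulVec, hxeig, Matrix.mulVec_smul]

include hirr in
private lemma rho_pos (hN : 0 < N) (hnn : ∀ i j, 0 ≤ A i j) {ρ : ℝ} (hρ0 : 0 ≤ ρ)
    {u : Fin N → ℝ} (hupos : ∀ i, 0 < u i) (heig : A.mulVec u = ρ • u) : 0 < ρ := by
  set e : Fin N := ⟨0, hN⟩
  have hpow : ∀ m : ℕ, (A ^ m).mulVec u = ρ ^ m • u := by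
    intro m
    induction m with
    | zero => simp [Matrix.one_mulVec]
    | succ m ih =>
      rw [pow_succ', ← Matrix.mulVec_mulVec, ih, Matrix.mulVec_smul, heig, smul_smul,
        mul_comm, ← pow_succ']
  set m := (hirr e e).choose with hm
  have hmpos : 0 < (A ^ m) e e := (hirr e e).choose_spec.2
  have hm1 : 1 ≤ m := (hirr e e).choose_spec.1
  have hge : (A ^ m) e e * u e ≤ (A ^ m).mulVec u e := by
    refine Finset.single_le_sum (f := fun l => (A ^ m) e l * u l)
      (fun l _ => mul_nonneg (pow_entry_nonneg A hnn m e l) (hupos l).le) (Finset.mem_univ e)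
  rw [hpow m] at hge
  have hlt : 0 < ρ ^ m * u e := lt_of_lt_of_le (mul_pos hmpos (hupos e)) (by simpa using hge)
  rcases hρ0.lt_or_eq with h | h
  · exact h
  · exfalso
    rw [← h, zero_pow (by omega), zero_mul] at hlt
    exact lt_irrefl 0 hlt

include hirr in
private lemma eig_unique (hN : 0 < N) (hnn : ∀ i j, 0 ≤ A i j) {ρ : ℝ} (hρ0 : 0 ≤ ρ)
    {u : Fin N → ℝ} (hupos : ∀ i, 0 < u i) (hueig : A.mulVec u = ρ • u)
    {v : Fin N → ℝ} (hveig : A.mulVec v = ρ • v) : ∃ t : ℝ, v = t • u := by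
  haveI : Nonempty (Fin N) := ⟨⟨0, hN⟩⟩
  obtain ⟨i0, _, hi0⟩ := Finset.exists_min_image Finset.univ (fun i => v i / u i)
    ⟨Classical.arbitrary _, Finset.mem_univ _⟩
  set t := v i0 / u i0 with htdef
  refine ⟨t, ?_⟩
  set y := fun i => v i - t * u i with hy
  have hy0 : ∀ i, 0 ≤ y i := by
    intro i
    have h1 : t ≤ v i / u i := hi0 i (Finset.mem_univ i)
    have h2 : t * u i ≤ v i := (le_div_iff₀ (hupos i)).mp h1
    simp only [hy]; linarith
  have hyi0 : y i0 = 0 := by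
    have h3 : t * u i0 = v i0 := by rw [htdef, div_mul_cancel₀ _ (hupos i0).ne']
    simp only [hy]
    linarith
  have hyeig : A.mulVec y = ρ • y := by
    have hyv : y = v - t • u := by funext i; simp [hy]
    rw [hyv, Matrix.mulVec_sub, Matrix.mulVec_smul, hueig, hveig, smul_sub, smul_smul, smul_smul,
      mul_comm]
  by_contra hne
  have hyne : ∃ j, y j ≠ 0 := by
    by_contra h
    push_neg at h
    apply hne
    funext i
    have := h i
    simp only [hy, sub_eq_zero] at this
    rw [Pi.smul_apply, smul_eq_mul]
    exact this
  have hypow : ∀ k : ℕ, (A ^ k).mulVec y = ρ ^ k • y := by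
    intro k
    induction k with
    | zero => simp [Matrix.one_mulVec]
    | succ k ih =>
      rw [pow_succ', ← Matrix.mulVec_mulVec, ih, Matrix.mulVec_smul, hyeig, smul_smul,
        mul_comm, ← pow_succ']
  have hBy : (B A hirr).mulVec y = (∑ k ∈ Finset.range (K A hirr + 1), ρ ^ k) • y := by
    rw [B]
    have hsum : (∑ k ∈ Finset.range (K A hirr + 1), A ^ k).mulVec y
        = ∑ k ∈ Finset.range (K A hirr + 1), (A ^ k).mulVec y := by
      funext i
      simp only [Matrix.mulVec, dotProduct, Matrix.sum_apply, Finset.sum_apply,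
        Finset.sum_mul]
      rw [Finset.sum_comm]
    rw [hsum]
    rw [Finset.sum_congr rfl fun k _ => hypow k, ← Finset.sum_smul]
  have hpos := mulVec_B_pos A hirr hnn hy0 hyne i0
  rw [hBy] at hpos
  rw [Pi.smul_apply, hyi0, smul_eq_mul, mul_zero] at hpos
  exact lt_irrefl 0 hpos

include hirr in
private lemma lt_rho_of_vanish (hN : 0 < N) (hnn : ∀ i j, 0 ≤ A i j) {ρ : ℝ} (hρ0 : 0 ≤ ρ)
    (hub : ∀ μ ∈ spectrum ℂ (A.map Complex.ofReal), ‖μ‖ ≤ ρ)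
    {u : Fin N → ℝ} (hupos : ∀ i, 0 < u i) (hueig : A.mulVec u = ρ • u)
    {v : Fin N → ℝ} (hv0 : ∀ i, 0 ≤ v i) (hvne : ∃ j, v j ≠ 0) {i0 : Fin N} (hvi0 : v i0 = 0)
    {t : ℝ} (hAv : ∀ i, t * v i ≤ A.mulVec v i) : t < ρ := by
  rcases Classical.em (∃ i, t * v i ≠ A.mulVec v i) with h | h
  · exact lt_rho A hirr hN hnn hρ0 hub hv0 hvne hAv h
  · push_neg at h
    have hAveq : A.mulVec v = t • v := by
      funext i; rw [Pi.smul_apply, smul_eq_mul]; exact (h i).symm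
    have hle : t ≤ ρ := le_rho A hirr hN hnn hρ0 hub hv0 hvne hAv
    rcases hle.lt_or_eq with hlt | heq
    · exact hlt
    · exfalso
      rw [heq] at hAveq
      obtain ⟨s, hs⟩ := eig_unique A hirr hN hnn hρ0 hupos hueig hAveq
      obtain ⟨j, hj⟩ := hvne
      have h1 : v i0 = s * u i0 := by rw [hs]; simp
      have h2 : s = 0 := by
        rw [hvi0] at h1
        rcases mul_eq_zero.mp h1.symm with h | h
        · exact h
        · exact absurd h (hupos i0).ne'
      apply hj
      rw [hs, h2]
      simp

end PFAux

namespace PFAux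

private lemma exists_greatest_abs {N : ℕ} (hN : 0 < N) (A : Matrix (Fin N) (Fin N) ℝ) :
    ∃ lam ∈ spectrum ℂ (A.map Complex.ofReal),
      IsGreatest ((fun μ : ℂ => ‖μ‖) '' spectrum ℂ (A.map Complex.ofReal))
        (‖lam‖) := by
  set M := A.map Complex.ofReal with hM
  have hp0 : M.charpoly ≠ 0 := (Matrix.charpoly_monic M).ne_zero
  have hdeg : 0 < M.charpoly.degree := by
    rw [Matrix.charpoly_degree_eq_dim, Fintype.card_fin]
    exact_mod_cast hN
  obtain ⟨z, hz⟩ := Complex.exists_root hdeg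
  have hspec : spectrum ℂ M = {x | M.charpoly.IsRoot x} := spectrum_eq_charpoly_roots M
  have hmemT : ∀ x, x ∈ M.charpoly.roots.toFinset ↔ x ∈ spectrum ℂ M := by
    intro x
    rw [Multiset.mem_toFinset, Polynomial.mem_roots hp0, hspec, Set.mem_setOf_eq]
  obtain ⟨lam, hlamT, hmax⟩ := Finset.exists_max_image M.charpoly.roots.toFinset (fun z : ℂ => ‖z‖)
    ⟨z, Multiset.mem_toFinset.mpr ((Polynomial.mem_roots hp0).mpr hz)⟩
  refine ⟨lam, (hmemT lam).mp hlamT, ⟨Set.mem_image_of_mem _ ((hmemT lam).mp hlamT), ?_⟩⟩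
  rintro r ⟨μ, hμ, rfl⟩
  exact hmax μ ((hmemT μ).mpr hμ)

private lemma rootMultiplicity_eq_one {p : Polynomial ℝ} {ρ : ℝ} (hp0 : p ≠ 0)
    (hroot : p.IsRoot ρ) (hderiv : (Polynomial.derivative p).eval ρ ≠ 0) :
    p.rootMultiplicity ρ = 1 := by
  have h1 : 1 ≤ p.rootMultiplicity ρ := (Polynomial.rootMultiplicity_pos hp0).mpr hroot
  by_contra hne
  have h2 : 2 ≤ p.rootMultiplicity ρ := by omega
  have hdvd : (Polynomial.X - Polynomial.C ρ) ^ 2 ∣ p :=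
    dvd_trans (pow_dvd_pow _ h2) (Polynomial.pow_rootMultiplicity_dvd p ρ)
  obtain ⟨g, hg⟩ := hdvd
  apply hderiv
  rw [hg]
  simp [Polynomial.derivative_mul, Polynomial.derivative_pow, Polynomial.eval_add,
    Polynomial.eval_mul, Polynomial.eval_pow, Polynomial.eval_sub, Polynomial.eval_X,
    Polynomial.eval_C, sub_self]

private lemma charpoly_deriv_pos {n : ℕ} (A : Matrix (Fin (n+1)) (Fin (n+1)) ℝ)
    (hnn : ∀ i j, 0 ≤ A i j) (hirr : ∀ i j, ∃ m : ℕ, 1 ≤ m ∧ 0 < (A ^ m) i j)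
    {ρ : ℝ} (hρ0 : 0 ≤ ρ)
    (hub : ∀ μ ∈ spectrum ℂ (A.map Complex.ofReal), ‖μ‖ ≤ ρ)
    {u : Fin (n+1) → ℝ} (hupos : ∀ i, 0 < u i) (hueig : A.mulVec u = ρ • u) :
    0 < (Polynomial.derivative A.charpoly).eval ρ := by
  rw [derivative_charpoly', Polynomial.eval_finset_sum]
  refine Finset.sum_pos (fun i _ => ?_) ⟨0, Finset.mem_univ 0⟩
  set Ai := A.submatrix i.succAbove i.succAbove with hAi
  set q := Ai.charpoly with hq
  -- no real roots ≥ ρ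
  have hnoroot : ∀ x : ℝ, ρ ≤ x → q.eval x ≠ 0 := by
    intro x hx hx0
    rw [hq, eval_charpoly'] at hx0
    obtain ⟨y, hy0, hy⟩ := (Matrix.exists_mulVec_eq_zero_iff).mpr hx0
    have heig : Ai.mulVec y = x • y := by
      rw [Matrix.sub_mulVec, Matrix.smul_mulVec, Matrix.one_mulVec, sub_eq_zero] at hy
      exact hy.symm
    set v : Fin (n+1) → ℝ := fun j => ∑ l, if i.succAbove l = j then |y l| else 0 with hv
    have hvs : ∀ l, v (i.succAbove l) = |y l| := by
      intro l
      have h := Finset.sum_eq_single (s := Finset.univ)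
        (f := fun l' : Fin n => if i.succAbove l' = i.succAbove l then |y l'| else 0) l
        (fun l' _ hl' => if_neg (fun h => hl' (Fin.succAbove_right_injective h)))
        (fun h => absurd (Finset.mem_univ l) h)
      simp only [hv]
      simpa using h
    have hvi : v i = 0 := by
      rw [hv]
      refine Finset.sum_eq_zero fun l _ => if_neg (Fin.succAbove_ne i l)
    have hv0 : ∀ j, 0 ≤ v j := by
      intro j
      rw [hv]
      refine Finset.sum_nonneg fun l _ => ?_
      split
      · exact abs_nonneg _
      · rfl
    have hvne : ∃ j, v j ≠ 0 := by
      obtain ⟨l, hl⟩ := Function.ne_iff.mp hy0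
      exact ⟨i.succAbove l, by rw [hvs l]; simpa using hl⟩
    have hAv : ∀ j, x * v j ≤ A.mulVec v j := by
      intro j
      rcases eq_or_ne j i with rfl | hji
      · rw [hvi, mul_zero, mulVec_apply'']
        exact Finset.sum_nonneg fun l _ => mul_nonneg (hnn j l) (hv0 l)
      · obtain ⟨l, rfl⟩ := Fin.exists_succAbove_eq hji
        have hxnn : 0 ≤ x := le_trans hρ0 hx
        have h1 : x * v (i.succAbove l) = |x * y l| := by
          rw [hvs l, abs_mul, abs_of_nonneg hxnn]
        have h2 : Ai.mulVec y l = x * y l := by rw [heig]; simp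
        have h3 : |Ai.mulVec y l| ≤ ∑ k, Ai l k * |y k| := by
          rw [mulVec_apply'']
          refine le_trans (Finset.abs_sum_le_sum_abs _ _) ?_
          refine Finset.sum_le_sum fun k _ => ?_
          rw [abs_mul, abs_of_nonneg (by rw [hAi]; exact hnn _ _)]
        have h4 : ∑ k, Ai l k * |y k| = A.mulVec v (i.succAbove l) := by
          have h5 : A.mulVec v (i.succAbove l)
              = ∑ j', A (i.succAbove l) j' * v j' := mulVec_apply'' _ _ _
          rw [h5, Fin.sum_univ_succAbove (fun j' => A (i.succAbove l) j' * v j') i, hvi, mul_zero,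
            zero_add]
          refine Finset.sum_congr rfl fun k _ => ?_
          rw [hvs k, hAi]
          rfl
        calc x * v (i.succAbove l) = |x * y l| := h1
          _ = |Ai.mulVec y l| := by rw [h2]
          _ ≤ ∑ k, Ai l k * |y k| := h3
          _ = A.mulVec v (i.succAbove l) := h4
    have := lt_rho_of_vanish A hirr (Nat.succ_pos n) hnn hρ0 hub hupos hueig hv0 hvne hvi hAv
    linarith
  -- monic and positivity at infinity
  have hmono : q.Monic := Matrix.charpoly_monic Ai
  rcases Nat.eq_zero_or_pos q.natDegree with hdeg | hdeg
  · have : q = 1 := hmono.natDegree_eq_zero.mp hdeg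
    rw [this]
    simp
  · have htop : Filter.Tendsto (fun x : ℝ => q.eval x) Filter.atTop Filter.atTop := by
      refine Polynomial.tendsto_atTop_of_leadingCoeff_nonneg q ?_ ?_
      · exact Polynomial.natDegree_pos_iff_degree_pos.mp hdeg
      · rw [hmono.leadingCoeff]; exact zero_le_one
    have hev : ∀ᶠ x : ℝ in Filter.atTop, 0 < q.eval x ∧ ρ < x :=
      (htop.eventually_gt_atTop 0).and (Filter.eventually_gt_atTop ρ)
    obtain ⟨b, hb, hρb⟩ := hev.exists
    rcases lt_trichotomy (q.eval ρ) 0 with h | h | h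
    · exfalso
      have hcont : ContinuousOn (fun x => q.eval x) (Set.Icc ρ b) :=
        (Polynomial.continuous q).continuousOn
      have : (0 : ℝ) ∈ Set.Icc (q.eval ρ) (q.eval b) := ⟨h.le, hb.le⟩
      obtain ⟨c, hc, hc0⟩ := intermediate_value_Icc hρb.le hcont this
      exact hnoroot c hc.1 hc0
    · exact absurd h (hnoroot ρ le_rfl)
    · exact h

end PFAux


end PerronFrobeniusAux

/-- Perron–Frobenius theorem for irreducible non-negative matrices: the
spectral radius `ρ` is a positive, simple eigenvalue admitting a strictly
positive eigenvector. -/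
theorem perron_frobenius (N : ℕ) (hN : 0 < N) (A : Matrix (Fin N) (Fin N) ℝ)
    (hnn : ∀ i j, 0 ≤ A i j)
    (hirr : ∀ i j, ∃ m : ℕ, 1 ≤ m ∧ 0 < (A ^ m) i j) :
    ∀ ρ : ℝ, ρ = sSup ((fun μ : ℂ => ‖μ‖) '' spectrum ℂ (A.map Complex.ofReal)) →
      0 < ρ ∧ ((ρ : ℂ) ∈ spectrum ℂ (A.map Complex.ofReal)) ∧
      Polynomial.rootMultiplicity ρ A.charpoly = 1 ∧
      ∃ v : Fin N → ℝ, (∀ i, 0 < v i) ∧ A.mulVec v = ρ • v := by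
  intro ρ hρ
  obtain ⟨n, rfl⟩ : ∃ n, N = n + 1 := ⟨N - 1, (Nat.succ_pred_eq_of_pos hN).symm⟩
  obtain ⟨lam, hlam, hgr⟩ := PFAux.exists_greatest_abs hN A
  have hρeq : ρ = ‖lam‖ := by rw [hρ, hgr.csSup_eq]
  subst hρeq
  have hρ0 : (0 : ℝ) ≤ ‖lam‖ := norm_nonneg _
  have hub : ∀ μ ∈ spectrum ℂ (A.map Complex.ofReal), ‖μ‖ ≤ ‖lam‖ :=
    fun μ hμ => hgr.2 (Set.mem_image_of_mem _ hμ)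
  obtain ⟨u, hupos, hueig⟩ := PFAux.exists_pos_eigenvector A hirr hN hnn hρ0 hub ⟨lam, hlam, rfl⟩
  have hρpos : 0 < ‖lam‖ := PFAux.rho_pos A hirr hN hnn hρ0 hupos hueig
  have hune : u ≠ 0 := fun h => absurd (congrFun h ⟨0, hN⟩) (hupos _).ne'
  have hdet : ((‖lam‖ : ℝ) • (1 : Matrix (Fin (n+1)) (Fin (n+1)) ℝ) - A).det = 0 := by
    rw [← Matrix.exists_mulVec_eq_zero_iff]
    exact ⟨u, hune, by
      rw [Matrix.sub_mulVec, Matrix.smul_mulVec, Matrix.one_mulVec, hueig, sub_self]⟩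
  have hroot : A.charpoly.IsRoot (‖lam‖) := by
    rw [Polynomial.IsRoot, eval_charpoly']
    exact hdet
  have hdetC : (((‖lam‖ : ℝ) : ℂ) • (1 : Matrix (Fin (n+1)) (Fin (n+1)) ℂ)
      - A.map Complex.ofReal).det = 0 := by
    have hmapeq : ((‖lam‖ : ℝ) • (1 : Matrix (Fin (n+1)) (Fin (n+1)) ℝ) - A).map
        Complex.ofReal = ((‖lam‖ : ℝ) : ℂ) • (1 : Matrix (Fin (n+1)) (Fin (n+1)) ℂ)
        - A.map Complex.ofReal := by
      ext i j
      simp only [Matrix.map_apply, Matrix.sub_apply, Matrix.smul_apply, smul_eq_mul,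
        Matrix.one_apply]
      split <;> push_cast <;> ring
    rw [← hmapeq]
    have hco : ((‖lam‖ : ℝ) • (1 : Matrix (Fin (n+1)) (Fin (n+1)) ℝ) - A).map
        Complex.ofReal = ((‖lam‖ : ℝ) • (1 : Matrix (Fin (n+1)) (Fin (n+1)) ℝ)
        - A).map ⇑Complex.ofRealHom := rfl
    rw [hco]
    have h2 := RingHom.map_det Complex.ofRealHom
      ((‖lam‖ : ℝ) • (1 : Matrix (Fin (n+1)) (Fin (n+1)) ℝ) - A)
    rw [hdet, map_zero] at h2
    exact h2.symm
  have hmem : ((‖lam‖ : ℝ) : ℂ) ∈ spectrum ℂ (A.map Complex.ofReal) := by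
    rw [spectrum_eq_charpoly_roots, Set.mem_setOf_eq, Polynomial.IsRoot, eval_charpoly']
    exact hdetC
  have hderiv := PFAux.charpoly_deriv_pos A hnn hirr hρ0 hub hupos hueig
  have hmult := PFAux.rootMultiplicity_eq_one (Matrix.charpoly_monic A).ne_zero hroot hderiv.ne'
  exact ⟨hρpos, hmem, hmult, u, hupos, hueig⟩
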